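/- Assume in addition that μ = μ' * μ' for some symmetric Borel probability measure μ' on G. Let π be an orthogonal representation of G on a real Hilbert space H, let T be the operator defined weakly by ⟨T u, w⟩ = ∫_G ⟨π_g u, w⟩ dμ(g) (a positive self-adjoint contraction), and let v ∈ H be a unit vector such that ⟨Tⁿ v, v⟩ → 0 and ⟨Tⁿ v, v⟩^{1/n} → 1 as n → ∞. For n ≥ 1 define the 1-coboundary c_n : G → H by c_n(g) := Tⁿ v − π_g Tⁿ v. Then ∫_G ‖c_n(x)‖² dμ(x) = 2⟨(T^{2n} − T^{2n+1}) v, v⟩ > 0, and ‖∫_G c_n(x) dμ(x)‖² / ∫_G ‖c_n(x)‖² dμ(x) → 0 as n → ∞; that is, the L²(μ)-normalized coboundaries b_n := c_n / (∫‖c_n‖²dμ)^{1/2} are asymptotically μ-harmonic. -/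

import Mathlib

open MeasureTheory Filter Topology
open scoped RealInnerProductSpace ENNReal Pointwise Classical

noncomputable section

variable {G : Type*} [Group G] [TopologicalSpace G] [IsTopologicalGroup G]
  [LocallyCompactSpace G] [MeasurableSpace G] [BorelSpace G]

/-- The word length `|x|_G` associated to the generating set `Q`. -/
noncomputable def wordLength (Q : Set G) (x : G) : ℕ :=
  if x = 1 then 0 else sInf {n : ℕ | 1 ≤ n ∧ x ∈ Q ^ n}

/-- Convolution of two measures on `G`. -/
noncomputable def mconv (μ ν : MeasureTheory.Measure G) : MeasureTheory.Measure G :=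
  (μ.prod ν).map fun p => p.1 * p.2

/-- The `n`-fold convolution power `μ^{*n}`. -/
noncomputable def convPow (μ : MeasureTheory.Measure G) : ℕ → MeasureTheory.Measure G
  | 0 => MeasureTheory.Measure.dirac 1
  | n + 1 => mconv (convPow μ n) μ

/-- The standing assumptions ("Convention") on `G`, `Q`, the Haar measure `m`
and the probability measure `μ`. -/
structure Convention (Q : Set G) (m μ : MeasureTheory.Measure G) : Prop where
  relCompact : IsCompact (closure Q)
  qsymm : Q⁻¹ = Q
  genNbhd : ∃ U : Set G, IsOpen U ∧ (1 : G) ∈ U ∧ U ⊆ Q ∧ Subgroup.closure U = ⊤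
  haar : m.IsHaarMeasure
  prob : IsProbabilityMeasure μ
  msymm : μ.map (fun x => x⁻¹) = μ
  ac : μ.AbsolutelyContinuous m
  lowerBound : ∃ ε : ℝ≥0∞, 0 < ε ∧ ∀ x ∈ Q, ε ≤ μ.rnDeriv m x
  moments : ∀ d : ℕ, ∫⁻ x, (wordLength Q x : ℝ≥0∞) ^ d ∂μ < ⊤

variable {H : Type*} [NormedAddCommGroup H] [InnerProductSpace ℝ H]

/-- `b : G → H` is a continuous `1`-cocycle for the orthogonal representation `π`. -/
def IsCocycle (π : G →* (H ≃ₗᵢ[ℝ] H)) (b : G → H) : Prop :=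
  Continuous b ∧ ∀ g x : G, b (g * x) = b g + π g (b x)

/-- `b` is a `1`-coboundary. -/
def IsCoboundary (π : G →* (H ≃ₗᵢ[ℝ] H)) (b : G → H) : Prop :=
  ∃ v : H, ∀ x : G, b x = v - π x v

/-- The subspace `K` is invariant under the representation `π`. -/
def IsInvariantSub (π : G →* (H ≃ₗᵢ[ℝ] H)) (K : Submodule ℝ H) : Prop :=
  ∀ g : G, ∀ v ∈ K, π g v ∈ K

/-- `P` is the orthogonal projection of `H` onto `K`. -/
def IsOrthProj (K : Submodule ℝ H) (P : H →ₗ[ℝ] H) : Prop :=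
  ∀ v : H, P v ∈ K ∧ v - P v ∈ Kᗮ



private lemma aux_cs {H : Type*} [NormedAddCommGroup H] [InnerProductSpace ℝ H]
    (S : H →L[ℝ] H) (hsa : ∀ x y : H, ⟪S x, y⟫ = ⟪x, S y⟫)
    (hpos : ∀ x : H, 0 ≤ ⟪S x, x⟫) (x y : H) :
    ⟪S x, y⟫ ^ 2 ≤ ⟪S x, x⟫ * ⟪S y, y⟫ := by
  have hysx : ⟪S y, x⟫ = ⟪S x, y⟫ := by rw [hsa, real_inner_comm]
  have key : ∀ t : ℝ, 0 ≤ ⟪S y, y⟫ * (t * t) + 2 * ⟪S x, y⟫ * t + ⟪S x, x⟫ := by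
    intro t
    have h := hpos (x + t • y)
    rw [map_add, _root_.map_smul] at h
    simp only [inner_add_left, inner_add_right, real_inner_smul_left, real_inner_smul_right,
      hysx] at h
    nlinarith [h]
  have hd := discrim_le_zero key
  unfold discrim at hd
  nlinarith [hd]


private lemma aux_seq (a : ℕ → ℝ) (ha0 : Tendsto a atTop (𝓝 0))
    (ha1 : Tendsto (fun n : ℕ => a n ^ ((n : ℝ)⁻¹)) atTop (𝓝 1))
    (hnonneg : ∀ k, 0 ≤ a k) (hdec : ∀ k, a (k + 1) ≤ a k)
    (hconv2 : ∀ k, 0 ≤ a k - 2 * a (k + 1) + a (k + 2))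
    (hlog : ∀ k, (a (k + 1) - a (k + 2)) ^ 2 ≤ (a k - a (k + 1)) * (a (k + 2) - a (k + 3))) :
    (∀ k, 0 < a k - a (k + 1)) ∧
      Tendsto (fun n : ℕ =>
        (a (2 * n) - 2 * a (2 * n + 1) + a (2 * n + 2)) / (2 * (a (2 * n) - a (2 * n + 1))))
        atTop (𝓝 0) := by
  set b : ℕ → ℝ := fun k => a k - a (k + 1) with hb
  have bnonneg : ∀ k, 0 ≤ b k := fun k => by simp only [hb]; linarith [hdec k]
  have bdec : ∀ k, b (k + 1) ≤ b k := fun k => by simp only [hb]; linarith [hconv2 k]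
  have blog : ∀ k, b (k + 1) ^ 2 ≤ b k * b (k + 2) := fun k => by simp only [hb]; exact hlog k
  -- positivity of b
  have bpos : ∀ k, 0 < b k := by
    by_contra hc
    push_neg at hc
    obtain ⟨k, hk⟩ := hc
    have hk0 : b k = 0 := le_antisymm hk (bnonneg k)
    have hble : ∀ j, b (k + j) ≤ b k := by
      intro j
      induction j with
      | zero => exact le_refl _
      | succ j ih => exact le_trans (bdec (k + j)) ih
    have hbz : ∀ j, b (k + j) = 0 := fun j =>
      le_antisymm (hk0 ▸ hble j) (bnonneg _)
    have haz : ∀ j, a (j + k) = a k := by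
      intro j
      induction j with
      | zero => simp
      | succ j ih =>
        have h1 : b (k + j) = 0 := hbz j
        simp only [hb] at h1
        have : j + 1 + k = (k + j) + 1 := by omega
        rw [this]
        have : j + k = k + j := by omega
        rw [this] at ih
        linarith
    have hak : a k = 0 := by
      have h1 : Tendsto (fun j : ℕ => a (j + k)) atTop (𝓝 (a k)) :=
        tendsto_const_nhds.congr fun j => (haz j).symm
      have h2 : Tendsto (fun j : ℕ => a (j + k)) atTop (𝓝 0) :=
        ha0.comp (tendsto_add_atTop_nat k)
      exact tendsto_nhds_unique h1 h2
    have hzero : ∀ n, k + 1 ≤ n → a n ^ ((n : ℝ)⁻¹) = 0 := by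
      intro n hn
      have han : a n = 0 := by
        have h1 := haz (n - k)
        have h2 : n - k + k = n := by omega
        rw [h2] at h1
        rw [h1, hak]
      rw [han, Real.zero_rpow]
      simp only [ne_eq, inv_eq_zero, Nat.cast_eq_zero]
      omega
    have h10 : (1 : ℝ) = 0 :=
      tendsto_nhds_unique ha1
        (tendsto_const_nhds.congr' (eventually_atTop.2 ⟨k + 1, fun n hn => (hzero n hn).symm⟩))
    norm_num at h10
  refine ⟨bpos, ?_⟩
  set s : ℕ → ℝ := fun k => b (k + 1) / b k with hs
  have spos : ∀ k, 0 < s k := fun k => div_pos (bpos _) (bpos _)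
  have sle1 : ∀ k, s k ≤ 1 := fun k => (div_le_one (bpos k)).2 (bdec k)
  have smono : Monotone s := by
    apply monotone_nat_of_le_succ
    intro k
    rw [hs]
    rw [div_le_div_iff₀ (bpos k) (bpos (k + 1))]
    nlinarith [blog k]
  have hbdd : BddAbove (Set.range s) := ⟨1, by rintro _ ⟨k, rfl⟩; exact sle1 k⟩
  set L : ℝ := ⨆ k, s k with hL
  have hsL : Tendsto s atTop (𝓝 L) := tendsto_atTop_ciSup smono hbdd
  have hsleL : ∀ k, s k ≤ L := fun k => le_ciSup hbdd k
  have hL1 : L ≤ 1 := ciSup_le sle1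
  have hL0 : 0 < L := lt_of_lt_of_le (spos 0) (hsleL 0)
  have hLge : 1 ≤ L := by
    by_contra hLlt
    push_neg at hLlt
    set C : ℝ := b 0 * (1 - L)⁻¹ with hC
    have hCpos : 0 < C := mul_pos (bpos 0) (inv_pos.2 (by linarith))
    have hbk : ∀ k, b k ≤ b 0 * L ^ k := by
      intro k
      induction k with
      | zero => simp
      | succ k ih =>
        have h1 : b (k + 1) = s k * b k := by
          rw [hs]
          exact (div_mul_cancel₀ _ (ne_of_gt (bpos k))).symm
        rw [h1, pow_succ]
        calc s k * b k ≤ L * (b 0 * L ^ k) := by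
              apply mul_le_mul (hsleL k) ih (le_of_lt (bpos k)) (le_of_lt hL0)
          _ = b 0 * (L ^ k * L) := by ring
    have hdiff : ∀ m k, a k - a (k + m) ≤ C * L ^ k := by
      intro m
      induction m with
      | zero =>
        intro k
        simp only [Nat.add_zero, sub_self]
        positivity
      | succ m ih =>
        intro k
        have h1 : a k - a (k + (m + 1)) = b k + (a (k + 1) - a ((k + 1) + m)) := by
          simp only [hb]
          have : k + (m + 1) = (k + 1) + m := by omega
          rw [this]
          ring
        rw [h1]
        have h2 := ih (k + 1)
        have h3 := hbk k
        have h1L : (1 : ℝ) - L ≠ 0 := by linarith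
        have hCe : b 0 + C * L = C := by
          rw [hC]
          field_simp
          ring
        calc b k + (a (k + 1) - a (k + 1 + m)) ≤ b 0 * L ^ k + C * L ^ (k + 1) := by
              apply add_le_add h3 h2
          _ = (b 0 + C * L) * L ^ k := by ring
          _ = C * L ^ k := by rw [hCe]
    have hak : ∀ k, a k ≤ C * L ^ k := by
      intro k
      have h1 : Tendsto (fun m : ℕ => a k - a (k + m)) atTop (𝓝 (a k - 0)) := by
        apply tendsto_const_nhds.sub
        have := ha0.comp (tendsto_add_atTop_nat k)
        simpa [add_comm, Function.comp_def] using this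
      rw [sub_zero] at h1
      exact le_of_tendsto h1 (Eventually.of_forall fun m => hdiff m k)
    have htend : Tendsto (fun k : ℕ => C ^ ((k : ℝ)⁻¹) * L) atTop (𝓝 L) := by
      have h1 : Tendsto (fun k : ℕ => C ^ ((k : ℝ)⁻¹)) atTop (𝓝 1) := by
        have h2 : Tendsto (fun k : ℕ => ((k : ℝ))⁻¹ * Real.log C) atTop (𝓝 0) := by
          simpa using (tendsto_inv_atTop_nhds_zero_nat (𝕜 := ℝ)).mul_const (Real.log C)
        have h3 := (Real.continuous_exp.tendsto 0).comp h2
        rw [Real.exp_zero] at h3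
        refine h3.congr fun k => ?_
        rw [Function.comp_apply, ← Real.exp_log hCpos, ← Real.exp_mul]
        congr 1
        rw [Real.log_exp]
        ring
      have := h1.mul_const L
      simpa using this
    have hev : ∀ᶠ k : ℕ in atTop, a k ^ ((k : ℝ)⁻¹) ≤ C ^ ((k : ℝ)⁻¹) * L := by
      refine eventually_atTop.2 ⟨1, fun k hk => ?_⟩
      have h1 : a k ^ ((k : ℝ)⁻¹) ≤ (C * L ^ k) ^ ((k : ℝ)⁻¹) :=
        Real.rpow_le_rpow (hnonneg k) (hak k) (by positivity)
      have hk0 : ((k : ℝ)) ≠ 0 := Nat.cast_ne_zero.2 (by omega)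
      have h2 : (C * L ^ k) ^ ((k : ℝ)⁻¹) = C ^ ((k : ℝ)⁻¹) * L := by
        rw [Real.mul_rpow (le_of_lt hCpos) (by positivity), ← Real.rpow_natCast L k,
          ← Real.rpow_mul (le_of_lt hL0), mul_inv_cancel₀ hk0, Real.rpow_one]
      rw [h2] at h1
      exact h1
    have : (1 : ℝ) ≤ L := le_of_tendsto_of_tendsto ha1 htend hev
    linarith
  have hLeq : L = 1 := le_antisymm hL1 hLge
  have hs1 : Tendsto s atTop (𝓝 1) := hLeq ▸ hsL
  have h2n : Tendsto (fun n : ℕ => 2 * n) atTop atTop :=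
    tendsto_atTop_mono (fun n => by simp only [id_eq]; omega) tendsto_id
  have hcomp : Tendsto (fun n : ℕ => s (2 * n)) atTop (𝓝 1) := hs1.comp h2n
  have hfin : Tendsto (fun n : ℕ => (1 - s (2 * n)) / 2) atTop (𝓝 0) := by
    have h1 : Tendsto (fun n : ℕ => 1 - s (2 * n)) atTop (𝓝 (1 - 1)) :=
      tendsto_const_nhds.sub hcomp
    have h2 := h1.div_const 2
    norm_num at h2
    exact h2
  refine hfin.congr fun n => ?_
  have hbp := bpos (2 * n)
  have hnum2 : a (2 * n) - 2 * a (2 * n + 1) + a (2 * n + 2) = b (2 * n) - b (2 * n + 1) := by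
    simp only [hb]; ring
  have hden : a (2 * n) - a (2 * n + 1) = b (2 * n) := by simp only [hb]
  rw [hnum2, hden]
  have hsv : s (2 * n) = b (2 * n + 1) / b (2 * n) := by rw [hs]
  rw [hsv]
  rw [div_eq_div_iff (by norm_num) (by positivity)]
  field_simp

/-- For the coboundaries `c_n(g) = Tⁿv - π_g Tⁿv` one has
`∫‖c_n‖² dμ = 2⟨(T^{2n} - T^{2n+1})v, v⟩ > 0`, and the normalized coboundaries are
asymptotically `μ`-harmonic. -/
theorem stmt_15 (Q : Set G) (m μ μ' : MeasureTheory.Measure G) (hconv : Convention Q m μ)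
    (hμ' : MeasureTheory.IsProbabilityMeasure μ') (hμ'symm : μ'.map (fun x => x⁻¹) = μ')
    (hsq : μ = mconv μ' μ')
    [CompleteSpace H]
    (π : G →* (H ≃ₗᵢ[ℝ] H)) (hπ : ∀ v : H, Continuous fun g : G => π g v)
    (T : H →L[ℝ] H) (hT : ∀ u w : H, ⟪T u, w⟫ = ∫ g, ⟪π g u, w⟫ ∂μ)
    (v : H) (hv : ‖v‖ = 1)
    (hv0 : Filter.Tendsto (fun n : ℕ => ⟪(T ^ n) v, v⟫) Filter.atTop (𝓝 0))
    (hv1 : Filter.Tendsto (fun n : ℕ => ⟪(T ^ n) v, v⟫ ^ ((n : ℝ)⁻¹)) Filter.atTop (𝓝 1)) :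
    (∀ n : ℕ, 1 ≤ n →
      (∫ x, ‖(T ^ n) v - π x ((T ^ n) v)‖ ^ 2 ∂μ)
          = 2 * ⟪(T ^ (2 * n) - T ^ (2 * n + 1)) v, v⟫ ∧
      0 < ∫ x, ‖(T ^ n) v - π x ((T ^ n) v)‖ ^ 2 ∂μ) ∧
    Filter.Tendsto (fun n : ℕ =>
        ‖∫ x, ((T ^ n) v - π x ((T ^ n) v)) ∂μ‖ ^ 2 /
          ∫ x, ‖(T ^ n) v - π x ((T ^ n) v)‖ ^ 2 ∂μ) Filter.atTop (𝓝 0) := by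
  haveI := hconv.prob
  haveI := hμ'
  -- σ-compactness of G
  obtain ⟨U, hUo, hU1, hUQ, hUgen⟩ := hconv.genNbhd
  have hCQsymm : (closure Q)⁻¹ = closure Q := by
    rw [inv_closure, hconv.qsymm]
  have hcpow : ∀ n : ℕ, IsCompact ((closure Q) ^ n) := by
    intro n
    induction n with
    | zero => rw [pow_zero]; exact isCompact_singleton
    | succ n ih => rw [pow_succ]; exact ih.mul hconv.relCompact
  have hcover : ∀ x : G, ∃ n : ℕ, x ∈ (closure Q) ^ n := by
    intro x
    have hx : x ∈ Subgroup.closure U := by rw [hUgen]; trivial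
    refine Subgroup.closure_induction
      (p := fun g _ => ∃ n : ℕ, g ∈ (closure Q) ^ n) ?_ ?_ ?_ ?_ hx
    · intro y hy
      exact ⟨1, by rw [pow_one]; exact subset_closure (hUQ hy)⟩
    · exact ⟨1, by rw [pow_one]; exact subset_closure (hUQ hU1)⟩
    · rintro y z _ _ ⟨n, hn⟩ ⟨m, hm⟩
      exact ⟨n + m, by rw [pow_add]; exact Set.mul_mem_mul hn hm⟩
    · rintro y _ ⟨n, hn⟩
      refine ⟨n, ?_⟩
      have h1 : y⁻¹ ∈ ((closure Q) ^ n)⁻¹ := Set.inv_mem_inv.2 hn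
      rwa [← inv_pow, hCQsymm] at h1
  -- strong measurability of continuous H-valued maps
  have hSM : ∀ f : G → H, Continuous f → ∀ ν : Measure G, AEStronglyMeasurable f ν := by
    intro f hf ν
    borelize H
    refine ((stronglyMeasurable_iff_measurable_separable).2
      ⟨hf.measurable, ?_⟩).aestronglyMeasurable
    have hsub : Set.range f ⊆ ⋃ n : ℕ, f '' ((closure Q) ^ n) := by
      rintro _ ⟨x, rfl⟩
      obtain ⟨n, hn⟩ := hcover x
      exact Set.mem_iUnion.2 ⟨n, Set.mem_image_of_mem f hn⟩
    exact (TopologicalSpace.IsSeparable.iUnion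
      fun n => ((hcpow n).image hf).isSeparable).mono hsub
  -- integrability facts
  have hIntPi : ∀ ν : Measure G, IsProbabilityMeasure ν → ∀ u : H,
      Integrable (fun g : G => π g u) ν := by
    intro ν hν u
    haveI := hν
    exact Integrable.mono' (integrable_const ‖u‖) (hSM _ (hπ u) ν)
      (Eventually.of_forall fun g => by rw [(π g).norm_map])
  have hIntIn : ∀ ν : Measure G, IsProbabilityMeasure ν → ∀ u w : H,
      Integrable (fun g : G => ⟪π g u, w⟫) ν := by
    intro ν hν u w
    haveI := hν
    refine Integrable.mono' (integrable_const (‖u‖ * ‖w‖))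
      (((hπ u).inner continuous_const).aestronglyMeasurable)
      (Eventually.of_forall fun g => ?_)
    calc ‖⟪π g u, w⟫‖ ≤ ‖π g u‖ * ‖w‖ := norm_inner_le_norm _ _
      _ = ‖u‖ * ‖w‖ := by rw [(π g).norm_map]
  -- the Bochner integral of the orbit map
  have hBoch : ∀ ν : Measure G, IsProbabilityMeasure ν → ∀ u w : H,
      ⟪∫ g, π g u ∂ν, w⟫ = ∫ g, ⟪π g u, w⟫ ∂ν := by
    intro ν hν u w
    haveI := hν
    rw [real_inner_comm, ← integral_inner (hIntPi ν hν u) w]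
    exact integral_congr_ae (Eventually.of_forall fun g => real_inner_comm _ _)
  have hTint : ∀ u : H, ∫ g, π g u ∂μ = T u := by
    intro u
    refine ext_inner_right ℝ fun w => ?_
    rw [hBoch μ hconv.prob u w, hT u w]
  -- π g⁻¹ is the inverse of π g
  have hsymm : ∀ (g : G) (w : H), π g⁻¹ w = (π g).symm w := by
    intro g w
    rw [map_inv]
    rfl
  have hflipg : ∀ (g : G) (x y : H), ⟪π g x, y⟫ = ⟪π g⁻¹ y, x⟫ := by
    intro g x y
    rw [(π g).inner_map_eq_flip, ← hsymm g y]
    exact real_inner_comm _ _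
  -- self-adjointness of T
  have hsa : ∀ x y : H, ⟪T x, y⟫ = ⟪x, T y⟫ := by
    intro x y
    have hflip0 : ⟪x, T y⟫ = ⟪T y, x⟫ := real_inner_comm _ _
    rw [hT x y, hflip0, hT y x]
    calc ∫ g, ⟪π g x, y⟫ ∂μ = ∫ g, ⟪π g⁻¹ y, x⟫ ∂μ := by
          exact integral_congr_ae (Eventually.of_forall fun g => hflipg g x y)
      _ = ∫ g, ⟪π g y, x⟫ ∂μ := by
          rw [show (∫ g, ⟪π g y, x⟫ ∂μ) = ∫ g, ⟪π g⁻¹ y, x⟫ ∂μ from by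
            conv_lhs => rw [← hconv.msymm]
            exact integral_map measurable_inv.aemeasurable
              ((((hπ y).inner continuous_const).measurable).aestronglyMeasurable)]
  -- T is a contraction on the diagonal
  have hcontr : ∀ x : H, ⟪T x, x⟫ ≤ ‖x‖ ^ 2 := by
    intro x
    rw [hT]
    have h1 : ∫ g, ⟪π g x, x⟫ ∂μ ≤ ∫ _, ‖x‖ ^ 2 ∂μ := by
      refine integral_mono (hIntIn μ hconv.prob x x) (integrable_const _) fun g => ?_
      calc ⟪π g x, x⟫ ≤ ‖π g x‖ * ‖x‖ := real_inner_le_norm _ _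
        _ = ‖x‖ ^ 2 := by rw [(π g).norm_map]; ring
    rwa [integral_const, probReal_univ, one_smul] at h1
  have hcontr' : ∀ x : H, ⟪T x, x⟫ ≤ ⟪x, x⟫ := by
    intro x
    rw [real_inner_self_eq_norm_sq]
    exact hcontr x
  -- positivity of T (uses μ = μ' * μ')
  have hpos : ∀ x : H, 0 ≤ ⟪T x, x⟫ := by
    intro x
    have hμeq : μ = (μ'.prod μ').map (fun p : G × G => p.1 * p.2) := hsq
    by_cases hAE : AEMeasurable (fun p : G × G => p.1 * p.2) (μ'.prod μ')
    · have hfm : Measurable (fun g : G => ⟪π g x, x⟫) :=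
        ((hπ x).inner continuous_const).measurable
      have hEq1 : ⟪T x, x⟫ = ∫ p : G × G, ⟪π (p.1 * p.2) x, x⟫ ∂(μ'.prod μ') := by
        rw [hT, hμeq, integral_map hAE hfm.aestronglyMeasurable]
      have hIntP : Integrable (fun p : G × G => ⟪π (p.1 * p.2) x, x⟫) (μ'.prod μ') := by
        refine Integrable.mono' (integrable_const (‖x‖ * ‖x‖))
          ((hfm.comp_aemeasurable hAE).aestronglyMeasurable)
          (Eventually.of_forall fun p => ?_)
        calc ‖⟪π (p.1 * p.2) x, x⟫‖ ≤ ‖π (p.1 * p.2) x‖ * ‖x‖ := norm_inner_le_norm _ _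
          _ = ‖x‖ * ‖x‖ := by rw [(π _).norm_map]
      rw [hEq1, integral_prod _ hIntP]
      set w : H := ∫ g', π g' x ∂μ' with hw
      have hInner : ∀ g : G, ∫ h, ⟪π (g * h) x, x⟫ ∂μ'
          = ⟪π g⁻¹ x, w⟫ := by
        intro g
        rw [hw, ← integral_inner (hIntPi μ' hμ' x) (π g⁻¹ x)]
        refine integral_congr_ae (Eventually.of_forall fun h => ?_)
        show ⟪π (g * h) x, x⟫ = ⟪π g⁻¹ x, π h x⟫
        have h1 : π (g * h) x = π g (π h x) := by rw [map_mul]; rfl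
        rw [h1]
        exact hflipg g (π h x) x
      calc ∫ g, ∫ h, ⟪π (g * h) x, x⟫ ∂μ' ∂μ'
          = ∫ g, ⟪π g⁻¹ x, w⟫ ∂μ' := by
            exact integral_congr_ae (Eventually.of_forall fun g => hInner g)
        _ = ∫ g, ⟪π g x, w⟫ ∂μ' := by
            rw [show (∫ g, ⟪π g x, w⟫ ∂μ')
                = ∫ g, ⟪π g⁻¹ x, w⟫ ∂μ' from by
              conv_lhs => rw [← hμ'symm]
              exact integral_map measurable_inv.aemeasurable
                ((((Continuous.inner (hπ x) continuous_const).measurable)).aestronglyMeasurable)]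
        _ = ⟪w, w⟫ := by rw [← hBoch μ' hμ' x w, ← hw]
        _ ≥ 0 := real_inner_self_nonneg
    · exfalso
      have h0 : μ = 0 := by rw [hμeq, Measure.map_of_not_aemeasurable hAE]
      have h1 := measure_univ (μ := μ)
      rw [h0] at h1
      simp at h1
  -- key operator inequality : ⟪Tx, Tx⟫ ≤ ⟪Tx, x⟫
  have hkey : ∀ x : H, ⟪T x, T x⟫ ≤ ⟪T x, x⟫ := by
    intro x
    have h := aux_cs T hsa hpos x (T x)
    have h2 : ⟪T (T x), T x⟫ ≤ ⟪T x, T x⟫ := hcontr' (T x)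
    rcases lt_or_eq_of_le (real_inner_self_nonneg : (0:ℝ) ≤ ⟪T x, T x⟫) with hq | hq
    · nlinarith [hpos x, hq, h, h2]
    · rw [← hq]; exact hpos x
  -- moving powers of T across the inner product
  have hu : ∀ k : ℕ, (T ^ (k + 1)) v = T ((T ^ k) v) := by
    intro k
    rw [pow_succ']
    rfl
  have hApow : ∀ (j i : ℕ) (x y : H), ⟪(T ^ i) x, (T ^ j) y⟫ = ⟪(T ^ (i + j)) x, y⟫ := by
    intro j
    induction j with
    | zero => intro i x y; simp
    | succ j ih =>
      intro i x y
      have h1 : (T ^ (j + 1)) y = (T ^ j) (T y) := by rw [pow_succ]; rfl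
      have h2 : (T ^ (i + j + 1)) x = T ((T ^ (i + j)) x) := by rw [pow_succ']; rfl
      calc ⟪(T ^ i) x, (T ^ (j + 1)) y⟫ = ⟪(T ^ i) x, (T ^ j) (T y)⟫ := by rw [h1]
        _ = ⟪(T ^ (i + j)) x, T y⟫ := ih i x (T y)
        _ = ⟪T ((T ^ (i + j)) x), y⟫ := (hsa _ y).symm
        _ = ⟪(T ^ (i + (j + 1))) x, y⟫ := by rw [show i + (j + 1) = i + j + 1 from rfl, ← h2]
  have hTn : ∀ k i j : ℕ, k = i + j → ⟪(T ^ k) v, v⟫ = ⟪(T ^ i) v, (T ^ j) v⟫ := by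
    intro k i j hk
    rw [hk, ← hApow j i v v]
  -- the hypotheses of aux_seq
  have hnonneg : ∀ k : ℕ, 0 ≤ ⟪(T ^ k) v, v⟫ := by
    intro k
    rcases Nat.even_or_odd k with ⟨m, hm⟩ | ⟨m, hm⟩
    · rw [hTn k m m (by omega)]
      exact real_inner_self_nonneg
    · rw [hTn k (m + 1) m (by omega), hu m]
      exact hpos _
  have hdec : ∀ k : ℕ, ⟪(T ^ (k + 1)) v, v⟫ ≤ ⟪(T ^ k) v, v⟫ := by
    intro k
    rcases Nat.even_or_odd k with ⟨m, hm⟩ | ⟨m, hm⟩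
    · rw [hTn k m m (by omega), hTn (k + 1) (m + 1) m (by omega), hu m]
      exact hcontr' _
    · rw [hTn k (m + 1) m (by omega), hTn (k + 1) (m + 1) (m + 1) (by omega), hu m]
      exact hkey _
  have hconv2 : ∀ k : ℕ, 0 ≤ ⟪(T ^ k) v, v⟫ - 2 * ⟪(T ^ (k + 1)) v, v⟫ + ⟪(T ^ (k + 2)) v, v⟫ := by
    intro k
    rcases Nat.even_or_odd k with ⟨m, hm⟩ | ⟨m, hm⟩
    · rw [hTn k m m (by omega), hTn (k + 1) (m + 1) m (by omega),
        hTn (k + 2) (m + 1) (m + 1) (by omega), hu m]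
      have h1 := norm_sub_sq_real ((T ^ m) v) (T ((T ^ m) v))
      have h2 : ⟪(T ^ m) v, T ((T ^ m) v)⟫ = ⟪T ((T ^ m) v), (T ^ m) v⟫ :=
        real_inner_comm _ _
      have h3 : ⟪(T ^ m) v, (T ^ m) v⟫ = ‖(T ^ m) v‖ ^ 2 := real_inner_self_eq_norm_sq _
      have h4 : ⟪T ((T ^ m) v), T ((T ^ m) v)⟫ = ‖T ((T ^ m) v)‖ ^ 2 :=
        real_inner_self_eq_norm_sq _
      nlinarith [sq_nonneg ‖(T ^ m) v - T ((T ^ m) v)‖]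
    · rw [hTn k (m + 1) m (by omega), hTn (k + 1) (m + 1) (m + 1) (by omega),
        hTn (k + 2) (m + 2) (m + 1) (by omega), hu m, hu (m + 1), hu m]
      have hz := hpos ((T ^ m) v - T ((T ^ m) v))
      rw [map_sub] at hz
      simp only [inner_sub_left, inner_sub_right] at hz
      have h4 : ⟪T (T ((T ^ m) v)), (T ^ m) v⟫ = ⟪T ((T ^ m) v), T ((T ^ m) v)⟫ :=
        hsa (T ((T ^ m) v)) ((T ^ m) v)
      linarith
  have hlog : ∀ k : ℕ, (⟪(T ^ (k + 1)) v, v⟫ - ⟪(T ^ (k + 2)) v, v⟫) ^ 2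
      ≤ (⟪(T ^ k) v, v⟫ - ⟪(T ^ (k + 1)) v, v⟫) *
        (⟪(T ^ (k + 2)) v, v⟫ - ⟪(T ^ (k + 3)) v, v⟫) := by
    intro k
    rcases Nat.even_or_odd k with ⟨m, hm⟩ | ⟨m, hm⟩
    · -- middle index k+1 odd : use the form ⟪(1 - T)·, ·⟫
      set S1 : H →L[ℝ] H := ContinuousLinearMap.id ℝ H - T with hS1def
      have hS1 : ∀ p q : H, ⟪S1 p, q⟫ = ⟪p, q⟫ - ⟪T p, q⟫ := by
        intro p q
        rw [hS1def]
        simp [inner_sub_left]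
      have sa1 : ∀ p q : H, ⟪S1 p, q⟫ = ⟪p, S1 q⟫ := by
        intro p q
        have h1 : ⟪p, S1 q⟫ = ⟪S1 q, p⟫ := real_inner_comm _ _
        rw [hS1, h1, hS1, hsa q p]
        have h2 : ⟪q, p⟫ = ⟪p, q⟫ := real_inner_comm _ _
        have h3 : ⟪q, T p⟫ = ⟪T p, q⟫ := real_inner_comm _ _
        rw [h2, h3]
      have pos1 : ∀ p : H, 0 ≤ ⟪S1 p, p⟫ := by
        intro p
        rw [hS1]
        have := hcontr' p
        linarith
      have h := aux_cs S1 sa1 pos1 ((T ^ m) v) ((T ^ (m + 1)) v)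
      rw [hS1, hS1, hS1] at h
      rw [← hu m, ← hu (m + 1)] at h
      rw [← hTn (k + 1) m (m + 1) (by omega), ← hTn (k + 2) (m + 1) (m + 1) (by omega),
        ← hTn k m m (by omega), ← hTn (k + 1) (m + 1) m (by omega),
        ← hTn (k + 3) (m + 2) (m + 1) (by omega)] at h
      exact h
    · -- middle index k+1 even : use the form ⟪(T - T²)·, ·⟫
      set S2 : H →L[ℝ] H := T - T * T with hS2def
      have hS2 : ∀ p q : H, ⟪S2 p, q⟫ = ⟪T p, q⟫ - ⟪T (T p), q⟫ := by
        intro p q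
        rw [hS2def]
        simp [inner_sub_left]
      have sa2 : ∀ p q : H, ⟪S2 p, q⟫ = ⟪p, S2 q⟫ := by
        intro p q
        have h1 : ⟪p, S2 q⟫ = ⟪S2 q, p⟫ := real_inner_comm _ _
        rw [hS2, h1, hS2]
        have e1 : ⟪T q, p⟫ = ⟪T p, q⟫ := by
          rw [hsa q p]
          exact real_inner_comm _ _
        have e2 : ⟪T (T q), p⟫ = ⟪T (T p), q⟫ := by
          rw [hsa (T q) p, hsa q (T p)]
          exact real_inner_comm _ _
        rw [e1, e2]
      have pos2 : ∀ p : H, 0 ≤ ⟪S2 p, p⟫ := by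
        intro p
        rw [hS2]
        have h1 : ⟪T (T p), p⟫ = ⟪T p, T p⟫ := hsa (T p) p
        have h2 := hkey p
        linarith
      have h := aux_cs S2 sa2 pos2 ((T ^ m) v) ((T ^ (m + 1)) v)
      rw [hS2, hS2, hS2] at h
      rw [← hu m, ← hu (m + 1), ← hu (m + 2)] at h
      rw [← hTn (k + 1) (m + 1) (m + 1) (by omega), ← hTn (k + 2) (m + 2) (m + 1) (by omega),
        ← hTn k (m + 1) m (by omega), ← hTn (k + 1) (m + 2) m (by omega),
        ← hTn (k + 3) (m + 3) (m + 1) (by omega)] at h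
      exact h
  obtain ⟨hbpos, htendsto⟩ :=
    aux_seq (fun k => ⟪(T ^ k) v, v⟫) hv0 hv1 hnonneg hdec hconv2 hlog
  -- the value of the L²(μ) norm of the coboundary
  have hIeq : ∀ n : ℕ, (∫ x, ‖(T ^ n) v - π x ((T ^ n) v)‖ ^ 2 ∂μ)
      = 2 * (⟪(T ^ (2 * n)) v, v⟫ - ⟪(T ^ (2 * n + 1)) v, v⟫) := by
    intro n
    have hpt : ∀ x : G, ‖(T ^ n) v - π x ((T ^ n) v)‖ ^ 2
        = 2 * ‖(T ^ n) v‖ ^ 2 - 2 * ⟪π x ((T ^ n) v), (T ^ n) v⟫ := by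
      intro x
      have h1 := norm_sub_sq_real ((T ^ n) v) (π x ((T ^ n) v))
      have h2 : ‖π x ((T ^ n) v)‖ = ‖(T ^ n) v‖ := (π x).norm_map _
      have h3 : ⟪(T ^ n) v, π x ((T ^ n) v)⟫ = ⟪π x ((T ^ n) v), (T ^ n) v⟫ :=
        real_inner_comm _ _
      rw [h1, h2, h3]
      ring
    have e1 : ‖(T ^ n) v‖ ^ 2 = ⟪(T ^ (2 * n)) v, v⟫ := by
      rw [hTn (2 * n) n n (by omega), real_inner_self_eq_norm_sq]
    have e2 : ⟪T ((T ^ n) v), (T ^ n) v⟫ = ⟪(T ^ (2 * n + 1)) v, v⟫ := by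
      rw [hTn (2 * n + 1) (n + 1) n (by omega), hu n]
    calc ∫ x, ‖(T ^ n) v - π x ((T ^ n) v)‖ ^ 2 ∂μ
        = ∫ x, (2 * ‖(T ^ n) v‖ ^ 2 - 2 * ⟪π x ((T ^ n) v), (T ^ n) v⟫) ∂μ := by
          exact integral_congr_ae (Eventually.of_forall fun x => hpt x)
      _ = 2 * ‖(T ^ n) v‖ ^ 2 - 2 * ∫ x, ⟪π x ((T ^ n) v), (T ^ n) v⟫ ∂μ := by
          rw [integral_sub (integrable_const _)
            ((hIntIn μ hconv.prob ((T ^ n) v) ((T ^ n) v)).const_mul 2),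
            integral_const, probReal_univ, one_smul, integral_const_mul]
      _ = 2 * ‖(T ^ n) v‖ ^ 2 - 2 * ⟪T ((T ^ n) v), (T ^ n) v⟫ := by rw [← hT]
      _ = 2 * (⟪(T ^ (2 * n)) v, v⟫ - ⟪(T ^ (2 * n + 1)) v, v⟫) := by
          rw [e1, e2]; ring
  -- the value of the mean of the coboundary
  have hnum : ∀ n : ℕ, ∫ x, ((T ^ n) v - π x ((T ^ n) v)) ∂μ
      = (T ^ n) v - T ((T ^ n) v) := by
    intro n
    rw [integral_sub (integrable_const _) (hIntPi μ hconv.prob _),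
      integral_const, probReal_univ, one_smul, hTint]
  constructor
  · intro n _
    constructor
    · rw [hIeq n]
      have h1 : ⟪(T ^ (2 * n) - T ^ (2 * n + 1)) v, v⟫
          = ⟪(T ^ (2 * n)) v, v⟫ - ⟪(T ^ (2 * n + 1)) v, v⟫ := by
        rw [ContinuousLinearMap.sub_apply, inner_sub_left]
      rw [h1]
    · rw [hIeq n]
      have := hbpos (2 * n)
      linarith
  · have hfun : ∀ n : ℕ, (⟪(T ^ (2 * n)) v, v⟫ - 2 * ⟪(T ^ (2 * n + 1)) v, v⟫
        + ⟪(T ^ (2 * n + 2)) v, v⟫) / (2 * (⟪(T ^ (2 * n)) v, v⟫ - ⟪(T ^ (2 * n + 1)) v, v⟫))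
        = ‖∫ x, ((T ^ n) v - π x ((T ^ n) v)) ∂μ‖ ^ 2 /
          ∫ x, ‖(T ^ n) v - π x ((T ^ n) v)‖ ^ 2 ∂μ := by
      intro n
      rw [hnum n, hIeq n]
      congr 1
      have h1 := norm_sub_sq_real ((T ^ n) v) (T ((T ^ n) v))
      have e1 : ‖(T ^ n) v‖ ^ 2 = ⟪(T ^ (2 * n)) v, v⟫ := by
        rw [hTn (2 * n) n n (by omega), real_inner_self_eq_norm_sq]
      have e2 : ⟪(T ^ n) v, T ((T ^ n) v)⟫ = ⟪(T ^ (2 * n + 1)) v, v⟫ := by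
        rw [hTn (2 * n + 1) (n + 1) n (by omega), hu n]
        exact real_inner_comm _ _
      have e3 : ‖T ((T ^ n) v)‖ ^ 2 = ⟪(T ^ (2 * n + 2)) v, v⟫ := by
        rw [hTn (2 * n + 2) (n + 1) (n + 1) (by omega), hu n, real_inner_self_eq_norm_sq]
      rw [h1, e1, e2, e3]
    exact htendsto.congr hfun


end
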